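/- Homotopy identity: for every α ∈ Ω of bidegree (a, b), one has L (ω * α) + ω * (L α) = (n − a + b) • α. -/

import Mathlib

open TensorProduct ExteriorAlgebra MvPolynomial

set_option synthInstance.maxHeartbeats 1000000
set_option maxHeartbeats 1000000

noncomputable section

variable (n : ℕ)

abbrev Om (n : ℕ) := MvPolynomial (Fin n ⊕ Fin n) ℝ ⊗[ℝ] ExteriorAlgebra ℝ ((Fin n ⊕ Fin n) → ℝ)

def xx (i : Fin n) : Om n := X (Sum.inl i) ⊗ₜ 1
def dp (i : Fin n) : Om n := X (Sum.inr i) ⊗ₜ 1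
def pp (i : Fin n) : Om n := 1 ⊗ₜ ι ℝ (Pi.single (Sum.inl i) 1)
def dx (i : Fin n) : Om n := 1 ⊗ₜ ι ℝ (Pi.single (Sum.inr i) 1)

def om (n : ℕ) : Om n := ∑ i : Fin n, dp n i * dx n i

/-- The odd derivation `∂/∂p_k` of the exterior factor of `Ω`:
left contraction with the dual-basis functional of `Pi.single (Sum.inl k) 1`. -/
def dpder (k : Fin n) :
    ExteriorAlgebra ℝ ((Fin n ⊕ Fin n) → ℝ) →ₗ[ℝ] ExteriorAlgebra ℝ ((Fin n ⊕ Fin n) → ℝ) :=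
  CliffordAlgebra.contractLeft (LinearMap.proj (Sum.inl k))

/-- Left contraction `∂/∂dx_k` of the exterior factor of `Ω` with the dual-basis functional of
`Pi.single (Sum.inr k) 1`. -/
def dxder (k : Fin n) :
    ExteriorAlgebra ℝ ((Fin n ⊕ Fin n) → ℝ) →ₗ[ℝ] ExteriorAlgebra ℝ ((Fin n ⊕ Fin n) → ℝ) :=
  CliffordAlgebra.contractLeft (LinearMap.proj (Sum.inr k))

/-- The de Rham operator `d` on `Ω`. -/
def dRham (n : ℕ) : Om n →ₗ[ℝ] Om n :=
  (∑ k : Fin n, LinearMap.mulLeft ℝ (dx n k) ∘ₗ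
      TensorProduct.map (MvPolynomial.pderiv (Sum.inl k)).toLinearMap LinearMap.id) +
  (∑ k : Fin n, LinearMap.mulLeft ℝ (dp n k) ∘ₗ
      TensorProduct.map LinearMap.id (dpder n k))

/-- The homotopy operator `L` on `Ω`. -/
def hoL (n : ℕ) : Om n →ₗ[ℝ] Om n :=
  ∑ k : Fin n, TensorProduct.map LinearMap.id (dxder n k) ∘ₗ
      TensorProduct.map (MvPolynomial.pderiv (Sum.inr k)).toLinearMap LinearMap.id

/-- `α ∈ Ω` has bidegree `(a, b)`: it is an ℝ-linear combination of elements `m ⊗ w` with `m`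
a monomial of total degree `b` in the variables `X (Sum.inr i)` and `w` a product of exterior
generators exactly `a` of which are of the form `ι (Pi.single (Sum.inr i) 1)`. -/
def HasBidegree (a b : ℕ) (α : Om n) : Prop :=
  α ∈ Submodule.span ℝ
    { t : Om n | ∃ (σ : (Fin n ⊕ Fin n) →₀ ℕ) (l : List (Fin n ⊕ Fin n)),
        (∑ i : Fin n, σ (Sum.inr i)) = b ∧
        (l.countP (fun i => i.isRight)) = a ∧
        t = (MvPolynomial.monomial σ (1 : ℝ)) ⊗ₜ
              (l.map (fun i => ι ℝ (Pi.single i (1 : ℝ)))).prod }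

/-- The coefficient algebra `F`. -/
abbrev Coef (n : ℕ) := MvPolynomial (Fin n) ℝ ⊗[ℝ] ExteriorAlgebra ℝ (Fin n → ℝ)

/-- Extension by zero `(Fin n → ℝ) →ₗ ((Fin n ⊕ Fin n) → ℝ)`, sending
`Pi.single i 1` to `Pi.single (Sum.inl i) 1`. -/
def inlExt : (Fin n → ℝ) →ₗ[ℝ] ((Fin n ⊕ Fin n) → ℝ) where
  toFun v := Sum.elim v 0
  map_add' u v := by ext i; cases i <;> simp
  map_smul' c v := by ext i; cases i <;> simp

/-- The algebra embedding `j : F → Ω` induced by `Sum.inl` on polynomial variables and on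
exterior generators. -/
def jmap (n : ℕ) : Coef n →ₐ[ℝ] Om n :=
  Algebra.TensorProduct.map (MvPolynomial.rename Sum.inl)
    (ExteriorAlgebra.lift ℝ ⟨(ι ℝ).comp (inlExt n), fun _ => ι_sq_zero _⟩)

/-- The coordinate volume form `dxᵛ = dx_1 * dx_2 * ⋯ * dx_n`. -/
def dxVol (n : ℕ) : Om n := (List.ofFn (dx n)).prod

/-- The operator `∂/∂p_k` on the exterior factor of `F`. -/
def pderC (k : Fin n) :
    ExteriorAlgebra ℝ (Fin n → ℝ) →ₗ[ℝ] ExteriorAlgebra ℝ (Fin n → ℝ) :=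
  CliffordAlgebra.contractLeft (LinearMap.proj k)

/-- The Batalin–Vilkovisky operator `Δ = ∑ₖ ∂²/∂x_k∂p_k` on `F`. -/
def bv (n : ℕ) : Coef n →ₗ[ℝ] Coef n :=
  ∑ k : Fin n, TensorProduct.map (MvPolynomial.pderiv k).toLinearMap LinearMap.id ∘ₗ
      TensorProduct.map LinearMap.id (pderC n k)

/-- The element `p_1 * p_2 * ⋯ * p_n` of `F`. -/
def pVol (n : ℕ) : Coef n :=
  (List.ofFn (fun i : Fin n => (1 : MvPolynomial (Fin n) ℝ) ⊗ₜ ι ℝ (Pi.single i (1 : ℝ)))).prod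
-- auxiliary lemmas
lemma hoL_tmul (m : MvPolynomial (Fin n ⊕ Fin n) ℝ)
    (w : ExteriorAlgebra ℝ ((Fin n ⊕ Fin n) → ℝ)) :
    hoL n (m ⊗ₜ w) = ∑ k : Fin n, (pderiv (Sum.inr k) m) ⊗ₜ (dxder n k w) := by
  simp [hoL, LinearMap.sum_apply]

lemma om_mul_tmul (m : MvPolynomial (Fin n ⊕ Fin n) ℝ)
    (w : ExteriorAlgebra ℝ ((Fin n ⊕ Fin n) → ℝ)) :
    om n * (m ⊗ₜ[ℝ] w) =
      ∑ i : Fin n, (X (Sum.inr i) * m) ⊗ₜ (ι ℝ (Pi.single (Sum.inr i) 1) * w) := by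
  simp [om, dp, dx, Finset.sum_mul, Algebra.TensorProduct.tmul_mul_tmul]

lemma X_mul_pderiv_monomial (σ : (Fin n ⊕ Fin n) →₀ ℕ) (i : Fin n ⊕ Fin n) :
    X i * pderiv i (monomial σ (1:ℝ)) = ((σ i : ℝ)) • monomial σ 1 := by
  rw [pderiv_monomial, one_mul]
  have hsm : ((σ i : ℝ)) • monomial σ (1:ℝ) = monomial σ ((σ i : ℝ)) := by
    rw [← map_smul]; simp
  rw [hsm]
  by_cases h : σ i = 0
  · simp [h]
  · have hσ : (Finsupp.single i 1) + (σ - Finsupp.single i 1) = σ := by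
      ext j
      rcases eq_or_ne j i with rfl | hj
      · simp only [Finsupp.add_apply, Finsupp.tsub_apply, Finsupp.single_eq_same]
        omega
      · simp [Finsupp.add_apply, Finsupp.tsub_apply, Finsupp.single_apply, Ne.symm hj]
    rw [X, monomial_mul, one_mul, hσ]
lemma euler_poly (σ : (Fin n ⊕ Fin n) →₀ ℕ) :
    ∑ k : Fin n, X (Sum.inr k) * pderiv (Sum.inr k) (monomial σ (1:ℝ))
      = ((∑ k : Fin n, σ (Sum.inr k) : ℕ) : ℝ) • monomial σ 1 := by
  rw [Finset.sum_congr rfl (fun k _ => X_mul_pderiv_monomial n σ (Sum.inr k)),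
    ← Finset.sum_smul]
  push_cast
  rfl

lemma euler_ext (l : List (Fin n ⊕ Fin n)) :
    ∑ k : Fin n, ι ℝ (Pi.single (Sum.inr k) (1:ℝ)) *
        dxder n k ((l.map fun i => ι ℝ (Pi.single i (1:ℝ))).prod)
      = ((l.countP (fun i => i.isRight) : ℕ) : ℝ) •
          (l.map fun i => ι ℝ (Pi.single i (1:ℝ))).prod := by
  induction l with
  | nil =>
      simp [dxder, CliffordAlgebra.contractLeft_one]
  | cons j t ih =>
      simp only [List.map_cons, List.prod_cons]
      set P := (t.map fun i => ι ℝ (Pi.single i (1:ℝ))).prod with hP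
      have hder : ∀ k : Fin n, dxder n k (ι ℝ (Pi.single j (1:ℝ)) * P) =
          ((Pi.single j (1:ℝ) : (Fin n ⊕ Fin n) → ℝ) (Sum.inr k)) • P -
            ι ℝ (Pi.single j (1:ℝ)) * dxder n k P := fun k => by
        rw [dxder]
        exact CliffordAlgebra.contractLeft_ι_mul
          (Q := (0 : QuadraticForm ℝ ((Fin n ⊕ Fin n) → ℝ)))
          (LinearMap.proj (Sum.inr k)) (Pi.single j (1:ℝ)) P
      have hswap : ∀ k : Fin n,
          (ι ℝ (Pi.single (Sum.inr k) (1:ℝ)) : ExteriorAlgebra ℝ ((Fin n ⊕ Fin n) → ℝ)) *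
              ι ℝ (Pi.single j (1:ℝ))
          = -(ι ℝ (Pi.single j (1:ℝ)) * ι ℝ (Pi.single (Sum.inr k) (1:ℝ))) := fun k => by
        have := ι_add_mul_swap (R := ℝ) (M := (Fin n ⊕ Fin n) → ℝ)
          (Pi.single (Sum.inr k) (1:ℝ)) (Pi.single j (1:ℝ))
        exact eq_neg_of_add_eq_zero_left this
      have key : ∀ k : Fin n,
          ι ℝ (Pi.single (Sum.inr k) (1:ℝ)) * dxder n k (ι ℝ (Pi.single j (1:ℝ)) * P)
          = ((Pi.single j (1:ℝ) : (Fin n ⊕ Fin n) → ℝ) (Sum.inr k)) •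
              (ι ℝ (Pi.single (Sum.inr k) (1:ℝ)) * P)
            + ι ℝ (Pi.single j (1:ℝ)) *
                (ι ℝ (Pi.single (Sum.inr k) (1:ℝ)) * dxder n k P) := fun k => by
        rw [hder k, mul_sub, mul_smul_comm, ← mul_assoc, hswap k, neg_mul, mul_assoc,
          sub_neg_eq_add]
      rw [Finset.sum_congr rfl (fun k _ => key k), Finset.sum_add_distrib,
        ← Finset.mul_sum, ih, mul_smul_comm]
      rcases j with j0 | j0
      · simp [List.countP_cons, Pi.single_apply]
      · have hfirst : ∑ k : Fin n, ((Pi.single (Sum.inr j0) (1:ℝ) : (Fin n ⊕ Fin n) → ℝ) (Sum.inr k)) •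
            (ι ℝ (Pi.single (Sum.inr k) (1:ℝ)) * P)
            = ι ℝ (Pi.single (Sum.inr j0) (1:ℝ)) * P := by
          rw [Finset.sum_eq_single j0]
          · simp
          · intro k _ hk
            have : (Sum.inr k : Fin n ⊕ Fin n) ≠ Sum.inr j0 := by simp [hk]
            simp [Pi.single_apply, this]
          · simp
        rw [hfirst, List.countP_cons]
        simp only [Sum.isRight_inr, if_true]
        push_cast
        rw [add_smul, one_smul]
        abel
lemma key_tmul (m : MvPolynomial (Fin n ⊕ Fin n) ℝ)
    (w : ExteriorAlgebra ℝ ((Fin n ⊕ Fin n) → ℝ)) :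
    hoL n (om n * (m ⊗ₜ w)) + om n * hoL n (m ⊗ₜ w)
      = n • (m ⊗ₜ[ℝ] w)
        + (∑ k : Fin n, X (Sum.inr k) * pderiv (Sum.inr k) m) ⊗ₜ[ℝ] w
        - m ⊗ₜ[ℝ] (∑ k : Fin n, ι ℝ (Pi.single (Sum.inr k) 1) * dxder n k w) := by
  have hterm : ∀ i k : Fin n,
      (pderiv (Sum.inr k) (X (Sum.inr i) * m)) ⊗ₜ[ℝ]
          (dxder n k (ι ℝ (Pi.single (Sum.inr i) 1) * w))
        = (if k = i then
            (m ⊗ₜ[ℝ] w + (X (Sum.inr i) * pderiv (Sum.inr i) m) ⊗ₜ[ℝ] w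
              - m ⊗ₜ[ℝ] (ι ℝ (Pi.single (Sum.inr i) 1) * dxder n i w)) else 0)
          - (X (Sum.inr i) * pderiv (Sum.inr k) m) ⊗ₜ[ℝ]
              (ι ℝ (Pi.single (Sum.inr i) 1) * dxder n k w) := by
    intro i k
    have hd : dxder n k (ι ℝ (Pi.single (Sum.inr i) 1) * w)
        = ((Pi.single (Sum.inr i) (1:ℝ) : (Fin n ⊕ Fin n) → ℝ) (Sum.inr k)) • w
          - ι ℝ (Pi.single (Sum.inr i) 1) * dxder n k w := by
      rw [dxder]
      exact CliffordAlgebra.contractLeft_ι_mul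
        (Q := (0 : QuadraticForm ℝ ((Fin n ⊕ Fin n) → ℝ)))
        (LinearMap.proj (Sum.inr k)) (Pi.single (Sum.inr i) (1:ℝ)) w
    rcases eq_or_ne k i with rfl | hik
    · rw [hd, pderiv_mul, pderiv_X_self, one_mul]
      simp only [Pi.single_eq_same, one_smul, if_pos rfl, if_true]
      rw [TensorProduct.add_tmul, TensorProduct.tmul_sub, TensorProduct.tmul_sub]
      abel
    · have h1 : pderiv (Sum.inr k) (X (Sum.inr i) : MvPolynomial (Fin n ⊕ Fin n) ℝ) = 0 :=
        pderiv_X_of_ne ((Sum.inr_injective (α := Fin n)).ne hik.symm)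
      have h2 : ((Pi.single (Sum.inr i) (1:ℝ) : (Fin n ⊕ Fin n) → ℝ) (Sum.inr k)) = 0 := by
        have : (Sum.inr k : Fin n ⊕ Fin n) ≠ Sum.inr i :=
          (Sum.inr_injective (α := Fin n)).ne hik
        simp [Pi.single_apply, this]
      rw [hd, pderiv_mul, h1, zero_mul, zero_add, h2, zero_smul, zero_sub, if_neg hik,
        TensorProduct.tmul_neg, zero_sub]
  have step1 : hoL n (om n * (m ⊗ₜ[ℝ] w))
      = ∑ i : Fin n, ∑ k : Fin n,
          (pderiv (Sum.inr k) (X (Sum.inr i) * m)) ⊗ₜ[ℝ]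
            (dxder n k (ι ℝ (Pi.single (Sum.inr i) 1) * w)) := by
    rw [om_mul_tmul, map_sum]
    exact Finset.sum_congr rfl fun i _ => hoL_tmul n _ _
  have step2 : om n * hoL n (m ⊗ₜ[ℝ] w)
      = ∑ k : Fin n, ∑ i : Fin n,
          (X (Sum.inr i) * pderiv (Sum.inr k) m) ⊗ₜ[ℝ]
            (ι ℝ (Pi.single (Sum.inr i) 1) * dxder n k w) := by
    rw [hoL_tmul, Finset.mul_sum]
    exact Finset.sum_congr rfl fun k _ => om_mul_tmul n _ _
  rw [step1, step2]
  rw [Finset.sum_congr rfl fun i _ => Finset.sum_congr rfl fun k _ => hterm i k]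
  simp only [Finset.sum_sub_distrib, Finset.sum_ite_eq', Finset.mem_univ, if_true]
  have hcomm : ∑ k : Fin n, ∑ i : Fin n,
      (X (Sum.inr i) * pderiv (Sum.inr k) m) ⊗ₜ[ℝ]
        (ι ℝ (Pi.single (Sum.inr i) 1) * dxder n k w)
      = ∑ i : Fin n, ∑ k : Fin n,
        (X (Sum.inr i) * pderiv (Sum.inr k) m) ⊗ₜ[ℝ]
          (ι ℝ (Pi.single (Sum.inr i) 1) * dxder n k w) := Finset.sum_comm
  rw [hcomm, Finset.sum_add_distrib, Finset.sum_const, Finset.card_univ, Fintype.card_fin,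
    ← TensorProduct.sum_tmul, ← TensorProduct.tmul_sum]
  abel


/-- Homotopy identity: for every `α ∈ Ω` of bidegree `(a, b)`, one has
`L (ω * α) + ω * (L α) = (n − a + b) • α`. -/
theorem homotopy_identity (n : ℕ) (hn : 1 ≤ n) (a b : ℕ) (α : Om n)
    (hα : HasBidegree n a b α) :
    hoL n (om n * α) + om n * hoL n α = ((n : ℤ) - a + b) • α := by
  rw [HasBidegree] at hα
  induction hα using Submodule.span_induction with
  | mem t ht =>
      obtain ⟨σ, l, hb, ha, rfl⟩ := ht
      rw [key_tmul, euler_poly, hb, euler_ext, ha, TensorProduct.smul_tmul',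
        TensorProduct.tmul_smul]
      rw [← Nat.cast_smul_eq_nsmul ℝ n, ← Int.cast_smul_eq_zsmul ℝ]
      push_cast
      rw [← TensorProduct.smul_tmul', ← TensorProduct.smul_tmul', add_smul, sub_smul]
      abel
  | zero => simp
  | add x y hx hy ihx ihy =>
      rw [mul_add, map_add, map_add, mul_add, smul_add, ← ihx, ← ihy]
      abel
  | smul c x hx ih =>
      rw [mul_smul_comm, map_smul, map_smul, mul_smul_comm, ← smul_add, ih, smul_comm]
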